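/- Let 3 ≤ a < b be integers, f(z) = (-ln(1-z))·(1-z)/z, and g(z) = f(z)·(b-1)·(a-1) + 1/(1-z) + 2 - b - a. If z ∈ (0,1) satisfies f(z) ≥ 1/(a-1), then g(z) > 0. -/

import Mathlib

theorem stmt_14 : ∀ a b : ℕ, 3 ≤ a → a < b →
    ∀ z ∈ Set.Ioo (0:ℝ) 1,
      (-Real.log (1 - z)) * (1 - z) / z ≥ 1 / ((a:ℝ) - 1) →
      (-Real.log (1 - z)) * (1 - z) / z * ((b:ℝ) - 1) * ((a:ℝ) - 1)
        + 1 / (1 - z) + 2 - b - a > 0 := by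
  intro a b ha hab z hz hf
  obtain ⟨hz0, hz1⟩ := hz
  set t := (-Real.log (1 - z)) * (1 - z) / z with ht
  have h1z : (0:ℝ) < 1 - z := by linarith
  have hA : (2:ℝ) ≤ (a:ℝ) - 1 := by
    have : (3:ℝ) ≤ (a:ℝ) := by exact_mod_cast ha
    linarith
  have hB : (a:ℝ) - 1 ≤ (b:ℝ) - 1 := by
    have : (a:ℝ) ≤ (b:ℝ) := by exact_mod_cast hab.le
    linarith
  -- -log(1-z) > z
  have hlog : Real.log (1 - z) < -z := by
    have := Real.log_lt_sub_one_of_pos h1z (by linarith)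
    linarith
  have htgt : t > 1 - z := by
    rw [ht, gt_iff_lt, lt_div_iff₀ hz0]
    nlinarith
  have ht0 : 0 < t := lt_trans h1z htgt
  -- 1/(1-z) > 1/t
  have hinv : 1 / (1 - z) > 1 / t := by
    exact one_div_lt_one_div_of_lt h1z htgt
  -- A*t ≥ 1
  have hA0 : (0:ℝ) < (a:ℝ) - 1 := by linarith
  have hAt : ((a:ℝ) - 1) * t ≥ 1 := by
    rw [ge_iff_le, ← div_le_iff₀' hA0]
    exact hf
  have hBt : ((b:ℝ) - 1) * t ≥ 1 := by nlinarith
  have key : t * ((b:ℝ) - 1) * ((a:ℝ) - 1) + 1 / t + 2 - b - a ≥ 0 := by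
    have h : (((a:ℝ) - 1) * t - 1) * (((b:ℝ) - 1) * t - 1) ≥ 0 := by nlinarith
    have h2 : 1 / t * t = 1 := by field_simp
    nlinarith [mul_pos ht0 ht0]
  linarith
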